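/- Let f, g : [a,b] → ℝ be continuous and positive, let p > 1 with 1/p + 1/q = 1, and suppose 0 < m ≤ f(x)/g(x) ≤ M < ∞ for all x ∈ [a,b]. Then (∫_a^b f(x) dx)^(1/p) · (∫_a^b g(x) dx)^(1/q) ≤ (M/m)^(1/(pq)) · ∫_a^b f(x)^(1/p) g(x)^(1/q) dx. -/

import Mathlib

theorem reverse_holder_ratio (a b p q m M : ℝ) (hab : a < b) (hp : 1 < p)
    (hpq : 1 / p + 1 / q = 1) (f g : ℝ → ℝ)
    (hfc : ContinuousOn f (Set.Icc a b)) (hgc : ContinuousOn g (Set.Icc a b))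
    (hfpos : ∀ x ∈ Set.Icc a b, 0 < f x) (hgpos : ∀ x ∈ Set.Icc a b, 0 < g x)
    (hm : 0 < m) (hbound : ∀ x ∈ Set.Icc a b, m ≤ f x / g x ∧ f x / g x ≤ M) :
    (∫ x in a..b, f x) ^ (1 / p) * (∫ x in a..b, g x) ^ (1 / q) ≤
      (M / m) ^ (1 / (p * q)) * ∫ x in a..b, f x ^ (1 / p) * g x ^ (1 / q) := by
  have hab' : a ≤ b := hab.le
  have ha : a ∈ Set.Icc a b := ⟨le_refl a, hab'⟩
  have hmM : m ≤ M := le_trans (hbound a ha).1 (hbound a ha).2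
  have hM : 0 < M := lt_of_lt_of_le hm hmM
  have hp0 : 0 < p := lt_trans one_pos hp
  have hp1 : 0 < 1 / p := by positivity
  have hp1' : 1 / p < 1 := by rw [div_lt_one hp0]; exact hp
  have hq1 : 0 < 1 / q := by linarith
  have hq0 : 0 < q := one_div_pos.mp hq1
  have huIcc : Set.uIcc a b = Set.Icc a b := Set.uIcc_of_le hab'
  have hfint : IntervalIntegrable f MeasureTheory.volume a b :=
    ContinuousOn.intervalIntegrable (by rwa [huIcc])
  have hgint : IntervalIntegrable g MeasureTheory.volume a b :=
    ContinuousOn.intervalIntegrable (by rwa [huIcc])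
  have hhc : ContinuousOn (fun x => f x ^ (1 / p) * g x ^ (1 / q)) (Set.Icc a b) :=
    (hfc.rpow_const (fun x _ => Or.inr hp1.le)).mul
      (hgc.rpow_const (fun x _ => Or.inr hq1.le))
  have hhint : IntervalIntegrable (fun x => f x ^ (1 / p) * g x ^ (1 / q))
      MeasureTheory.volume a b :=
    ContinuousOn.intervalIntegrable (by rwa [huIcc])
  set I := ∫ x in a..b, f x ^ (1 / p) * g x ^ (1 / q) with hIdef
  have hI : 0 < I := by
    apply intervalIntegral.intervalIntegral_pos_of_pos_on hhint _ hab
    intro x hx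
    have hx' : x ∈ Set.Icc a b := Set.Ioo_subset_Icc_self hx
    exact mul_pos (Real.rpow_pos_of_pos (hfpos x hx') _)
      (Real.rpow_pos_of_pos (hgpos x hx') _)
  have hApos : 0 < ∫ x in a..b, f x := by
    apply intervalIntegral.intervalIntegral_pos_of_pos_on hfint _ hab
    intro x hx
    exact hfpos x (Set.Ioo_subset_Icc_self hx)
  have hBpos : 0 < ∫ x in a..b, g x := by
    apply intervalIntegral.intervalIntegral_pos_of_pos_on hgint _ hab
    intro x hx
    exact hgpos x (Set.Ioo_subset_Icc_self hx)
  -- pointwise bounds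
  have key1 : ∀ x ∈ Set.Icc a b, f x ≤ M ^ (1 / q) * (f x ^ (1 / p) * g x ^ (1 / q)) := by
    intro x hx
    have hfx := hfpos x hx
    have hgx := hgpos x hx
    have hfg : f x ≤ M * g x := by
      have := (hbound x hx).2
      rw [div_le_iff₀ hgx] at this
      exact this
    have h1 : f x = f x ^ (1 / p) * f x ^ (1 / q) := by
      rw [← Real.rpow_add hfx, hpq, Real.rpow_one]
    have h2 : f x ^ (1 / q) ≤ M ^ (1 / q) * g x ^ (1 / q) := by
      rw [← Real.mul_rpow hM.le hgx.le]
      exact Real.rpow_le_rpow hfx.le hfg hq1.le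
    calc f x = f x ^ (1 / p) * f x ^ (1 / q) := h1
      _ ≤ f x ^ (1 / p) * (M ^ (1 / q) * g x ^ (1 / q)) :=
          mul_le_mul_of_nonneg_left h2 (Real.rpow_nonneg hfx.le _)
      _ = M ^ (1 / q) * (f x ^ (1 / p) * g x ^ (1 / q)) := by ring
  have key2 : ∀ x ∈ Set.Icc a b, g x ≤ m ^ (-(1 / p)) * (f x ^ (1 / p) * g x ^ (1 / q)) := by
    intro x hx
    have hfx := hfpos x hx
    have hgx := hgpos x hx
    have hfg : g x ≤ f x / m := by
      have := (hbound x hx).1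
      rw [le_div_iff₀ hgx] at this
      rw [le_div_iff₀ hm]
      linarith
    have h1 : g x = g x ^ (1 / p) * g x ^ (1 / q) := by
      rw [← Real.rpow_add hgx, hpq, Real.rpow_one]
    have h2 : g x ^ (1 / p) ≤ m ^ (-(1 / p)) * f x ^ (1 / p) := by
      have : g x ^ (1 / p) ≤ (f x / m) ^ (1 / p) :=
        Real.rpow_le_rpow hgx.le hfg hp1.le
      rw [Real.rpow_neg hm.le, ← div_eq_inv_mul]
      rwa [Real.div_rpow hfx.le hm.le] at this
    calc g x = g x ^ (1 / p) * g x ^ (1 / q) := h1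
      _ ≤ (m ^ (-(1 / p)) * f x ^ (1 / p)) * g x ^ (1 / q) :=
          mul_le_mul_of_nonneg_right h2 (Real.rpow_nonneg hgx.le _)
      _ = m ^ (-(1 / p)) * (f x ^ (1 / p) * g x ^ (1 / q)) := by ring
  have hA : (∫ x in a..b, f x) ≤ M ^ (1 / q) * I := by
    have := intervalIntegral.integral_mono_on hab' hfint (hhint.const_mul (M ^ (1 / q)))
      key1
    rwa [intervalIntegral.integral_const_mul] at this
  have hB : (∫ x in a..b, g x) ≤ m ^ (-(1 / p)) * I := by
    have := intervalIntegral.integral_mono_on hab' hgint (hhint.const_mul (m ^ (-(1 / p))))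
      key2
    rwa [intervalIntegral.integral_const_mul] at this
  have step1 : (∫ x in a..b, f x) ^ (1 / p) ≤ (M ^ (1 / q) * I) ^ (1 / p) :=
    Real.rpow_le_rpow hApos.le hA hp1.le
  have step2 : (∫ x in a..b, g x) ^ (1 / q) ≤ (m ^ (-(1 / p)) * I) ^ (1 / q) :=
    Real.rpow_le_rpow hBpos.le hB hq1.le
  have final : (M ^ (1 / q) * I) ^ (1 / p) * (m ^ (-(1 / p)) * I) ^ (1 / q)
      = (M / m) ^ (1 / (p * q)) * I := by
    rw [Real.mul_rpow (Real.rpow_nonneg hM.le _) hI.le,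
      Real.mul_rpow (Real.rpow_nonneg hm.le _) hI.le,
      ← Real.rpow_mul hM.le, ← Real.rpow_mul hm.le,
      Real.div_rpow hM.le hm.le]
    have e1 : 1 / q * (1 / p) = 1 / (p * q) := by
      field_simp
    have e2 : -(1 / p) * (1 / q) = -(1 / (p * q)) := by
      field_simp
    rw [e1, e2, Real.rpow_neg hm.le]
    have e3 : I ^ (1 / p) * I ^ (1 / q) = I := by
      rw [← Real.rpow_add hI, hpq, Real.rpow_one]
    have : M ^ (1 / (p * q)) * I ^ (1 / p) * ((m ^ (1 / (p * q)))⁻¹ * I ^ (1 / q))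
        = M ^ (1 / (p * q)) / m ^ (1 / (p * q)) * (I ^ (1 / p) * I ^ (1 / q)) := by
      ring
    rw [this, e3]
  calc (∫ x in a..b, f x) ^ (1 / p) * (∫ x in a..b, g x) ^ (1 / q)
      ≤ (M ^ (1 / q) * I) ^ (1 / p) * (m ^ (-(1 / p)) * I) ^ (1 / q) :=
        mul_le_mul step1 step2 (Real.rpow_nonneg hBpos.le _)
          (Real.rpow_nonneg (by positivity) _)
    _ = (M / m) ^ (1 / (p * q)) * I := final
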